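/- Let H be the subgroup of SO(3) generated by the matrices A = [[1/3, −2√2/3, 0], [2√2/3, 1/3, 0], [0, 0, 1]] and B = [[1, 0, 0], [0, 1/3, −2√2/3], [0, 2√2/3, 1/3]], and let D ⊆ S² be the set of all points of the unit sphere S² fixed by some non-identity element of H (the union over g ∈ H \ {id} of the intersections of the rotation axis of g with S²). Then S² \ D is SO(3)-paradoxical. -/

import Mathlib

open Pointwise Matrix

set_option synthInstance.maxHeartbeats 1000000
set_option maxHeartbeats 1000000

/-- Nonempty subsets `A` and `B` of a `G`-space `X` are `G`-equidecomposable if there are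
finitely many group elements `g₁, …, gₙ` and partitions `A = A₁ ⊔ ⋯ ⊔ Aₙ`,
`B = B₁ ⊔ ⋯ ⊔ Bₙ` with `Aᵢ = gᵢ • Bᵢ` for all `i`. -/
def Equidecomposable (G : Type*) {X : Type*} [Group G] [MulAction G X]
    (A B : Set X) : Prop :=
  ∃ (n : ℕ) (g : Fin n → G) (As Bs : Fin n → Set X),
    A = ⋃ i, As i ∧ B = ⋃ i, Bs i ∧
    (Pairwise fun i j => Disjoint (As i) (As j)) ∧
    (Pairwise fun i j => Disjoint (Bs i) (Bs j)) ∧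
    ∀ i, As i = g i • Bs i

/-- A subset `E` of a `G`-space `X` is `G`-paradoxical if it contains disjoint subsets
`A` and `B`, each of which is `G`-equidecomposable with `E`. -/
def Paradoxical (G : Type*) {X : Type*} [Group G] [MulAction G X] (E : Set X) : Prop :=
  ∃ A B : Set X, A ⊆ E ∧ B ⊆ E ∧ Disjoint A B ∧
    Equidecomposable G A E ∧ Equidecomposable G B E

/-- The unitary/orthogonal group acts on vectors by matrix multiplication. -/
instance unitarySMulVec {n : ℕ} {K : Type*} [CommRing K] [StarRing K] :
    MulAction (Matrix.unitaryGroup (Fin n) K) (Fin n → K) where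
  smul g v := (g : Matrix (Fin n) (Fin n) K).mulVec v
  one_smul v := by
    show (1 : Matrix.unitaryGroup (Fin n) K).1.mulVec v = v
    simp
  mul_smul g h v := by
    show (g * h : Matrix.unitaryGroup (Fin n) K).1.mulVec v
        = g.1.mulVec (h.1.mulVec v)
    simp [Matrix.mulVec_mulVec]

/-- The `n`-dimensional unit sphere `Sⁿ = {x ∈ ℝⁿ⁺¹ : x₁² + ⋯ + x_{n+1}² = 1}`. -/
def SphereSet (n : ℕ) : Set (Fin (n + 1) → ℝ) := {x | ∑ i, x i ^ 2 = 1}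

/-- `SO(n)`, the special orthogonal group, as a subgroup of the orthogonal group. -/
def SO (n : ℕ) : Subgroup (Matrix.orthogonalGroup (Fin n) ℝ) where
  carrier := {g | (g : Matrix (Fin n) (Fin n) ℝ).det = 1}
  one_mem' := by simp
  mul_mem' := by
    intro a b ha hb
    simp only [Set.mem_setOf_eq] at *
    rw [Matrix.UnitaryGroup.mul_val, Matrix.det_mul, ha, hb, mul_one]
  inv_mem' := by
    intro a ha
    simp only [Set.mem_setOf_eq] at *
    have h : ((a : Matrix (Fin n) (Fin n) ℝ) * ((a⁻¹ : Matrix.orthogonalGroup (Fin n) ℝ) :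
        Matrix (Fin n) (Fin n) ℝ)).det = 1 := by
      rw [← Matrix.UnitaryGroup.mul_val, mul_inv_cancel]
      simp
    rw [Matrix.det_mul, ha, one_mul] at h
    exact h

noncomputable def matA : Matrix (Fin 3) (Fin 3) ℝ :=
  !![1/3, -(2*Real.sqrt 2)/3, 0;
     (2*Real.sqrt 2)/3, 1/3, 0;
     0, 0, 1]

noncomputable def matB : Matrix (Fin 3) (Fin 3) ℝ :=
  !![1, 0, 0;
     0, 1/3, -(2*Real.sqrt 2)/3;
     0, (2*Real.sqrt 2)/3, 1/3]

lemma sqrt_two_mul_self : Real.sqrt 2 * Real.sqrt 2 = 2 := Real.mul_self_sqrt (by norm_num)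

lemma matA_mem : matA ∈ Matrix.orthogonalGroup (Fin 3) ℝ := by
  rw [Matrix.mem_orthogonalGroup_iff]
  ext i j
  fin_cases i <;> fin_cases j <;>
    simp [matA, Matrix.mul_apply, Fin.sum_univ_three, Matrix.conjTranspose_apply] <;>
    nlinarith [sqrt_two_mul_self]

lemma matB_mem : matB ∈ Matrix.orthogonalGroup (Fin 3) ℝ := by
  rw [Matrix.mem_orthogonalGroup_iff]
  ext i j
  fin_cases i <;> fin_cases j <;>
    simp [matB, Matrix.mul_apply, Fin.sum_univ_three, Matrix.conjTranspose_apply] <;>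
    nlinarith [sqrt_two_mul_self]

lemma matA_det : matA.det = 1 := by
  simp [matA, Matrix.det_fin_three]
  nlinarith [sqrt_two_mul_self]

lemma matB_det : matB.det = 1 := by
  simp [matB, Matrix.det_fin_three]
  nlinarith [sqrt_two_mul_self]

/-- The rotation `A` as an element of `SO(3)`. -/
noncomputable def soA : SO 3 := ⟨⟨matA, matA_mem⟩, matA_det⟩

/-- The rotation `B` as an element of `SO(3)`. -/
noncomputable def soB : SO 3 := ⟨⟨matB, matB_mem⟩, matB_det⟩

/-- The subgroup `H` of `SO(3)` generated by the rotations `A` and `B`. -/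
noncomputable def Hsub : Subgroup (SO 3) := Subgroup.closure {soA, soB}

/-- The set `D` of points of `S²` fixed by some non-identity element of `H`. -/
def fixedPointSet : Set (Fin 3 → ℝ) :=
  {x | x ∈ SphereSet 2 ∧ ∃ g ∈ Hsub, g ≠ 1 ∧ g • x = x}


-- ## Auxiliary: free group combinatorics


def btStep : Bool × Bool → ℤ × ℤ × ℤ → ℤ × ℤ × ℤ
  | (true, true), (a,b,c) => (a - 4*b, b + 2*a, 3*c)
  | (true, false), (a,b,c) => (a + 4*b, b - 2*a, 3*c)
  | (false, true), (a,b,c) => (3*a, b - 2*c, c + 4*b)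
  | (false, false), (a,b,c) => (3*a, b + 2*c, c - 4*b)

def btVec (L : List (Bool × Bool)) : ℤ × ℤ × ℤ := L.foldr btStep (1,0,0)

def btKey : Bool × Bool → ℤ × ℤ × ℤ → Prop
  | (true, true), v => (v.2.1 : ZMod 3) = 2 * v.1
  | (true, false), v => (v.2.1 : ZMod 3) = v.1
  | (false, true), v => (v.2.1 : ZMod 3) = v.2.2
  | (false, false), v => (v.2.1 : ZMod 3) = 2 * v.2.2

lemma nine_zmod : (9 : ZMod 3) = 0 := by decide

lemma btKey_step (x : Bool × Bool) (v : ℤ × ℤ × ℤ) : btKey x (btStep x v) := by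
  obtain ⟨a, b, c⟩ := v
  have h9 : ((9 * b : ℤ) : ZMod 3) = 0 := by push_cast [nine_zmod]; ring
  rcases x with ⟨_ | _, _ | _⟩ <;>
    · show ((_ : ℤ) : ZMod 3) = _
      simp only [btStep]
      push_cast
      reduce_mod_char
      try ring_nf
      try reduce_mod_char

lemma btStep_fst (x : Bool × Bool) (v : ℤ × ℤ × ℤ) (hx : x.1 = false) :
    ((btStep x v).1 : ZMod 3) = 0 := by
  obtain ⟨a, b, c⟩ := v
  rcases x with ⟨_ | _, _ | _⟩ <;> simp_all <;>
    · show ((3 * a : ℤ) : ZMod 3) = 0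
      push_cast
      have : (3 : ZMod 3) = 0 := by decide
      rw [this]; ring

lemma btStep_trd (x : Bool × Bool) (v : ℤ × ℤ × ℤ) (hx : x.1 = true) :
    ((btStep x v).2.2 : ZMod 3) = 0 := by
  obtain ⟨a, b, c⟩ := v
  rcases x with ⟨_ | _, _ | _⟩ <;> simp_all <;>
    · show ((3 * c : ℤ) : ZMod 3) = 0
      push_cast
      have : (3 : ZMod 3) = 0 := by decide
      rw [this]; ring

def NoCancel (p q : Bool × Bool) : Prop := ¬(p.1 = q.1 ∧ p.2 = !q.2)

lemma btVec_b_ne_zero : ∀ (L : List (Bool × Bool)), List.Chain' NoCancel L →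
    (∃ s, L.getLast? = some (true, s)) → ((btVec L).2.1 : ZMod 3) ≠ 0 := by
  intro L
  induction L with
  | nil => rintro _ ⟨s, h⟩; simp at h
  | cons x rest ih =>
    rintro hch ⟨s, hlast⟩
    match rest, hch, hlast, ih with
    | [], _, hlast, _ =>
      have hx : x = (true, s) := by simpa using hlast
      subst hx
      cases s <;> decide
    | y :: t, hch, hlast, ih =>
      have hlast' : (y :: t).getLast? = some (true, s) := by
        rwa [List.getLast?_cons_cons] at hlast
      have hxy : NoCancel x y := (List.isChain_cons_cons.mp hch).1
      have hb := ih hch.tail ⟨s, hlast'⟩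
      have hkey : btKey y (btVec (y :: t)) := btKey_step y (btVec t)
      have ha : y.1 = false → ((btVec (y :: t)).1 : ZMod 3) = 0 :=
        fun h => btStep_fst y (btVec t) h
      have hc : y.1 = true → ((btVec (y :: t)).2.2 : ZMod 3) = 0 :=
        fun h => btStep_trd y (btVec t) h
      show ((btStep x (btVec (y :: t))).2.1 : ZMod 3) ≠ 0
      obtain ⟨⟨a, b, c⟩, hv⟩ : ∃ v, btVec (y :: t) = v := ⟨_, rfl⟩
      rw [hv] at hb hkey ha hc ⊢
      rcases x with ⟨xi, xs⟩
      rcases y with ⟨yi, ys⟩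
      cases xi <;> cases yi <;> cases xs <;> cases ys <;>
        first
        | exact absurd (by exact ⟨rfl, rfl⟩) hxy
        | (revert hb hkey ha hc
           simp only [btStep, btKey, Bool.false_eq_true, Bool.true_eq_false, false_implies,
             forall_const, IsEmpty.forall_iff, true_implies, eq_self_iff_true]
           push_cast
           generalize ((a : ZMod 3)) = α
           generalize ((b : ZMod 3)) = β
           generalize ((c : ZMod 3)) = γ
           revert α β γ
           decide)

lemma chain'_noCancel_reduce (L : List (Bool × Bool)) :
    List.Chain' NoCancel (FreeGroup.reduce L) := by
  induction L with
  | nil => exact List.isChain_nil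
  | cons x L ih =>
    rw [FreeGroup.reduce.cons]
    rcases h : FreeGroup.reduce L with _ | ⟨y, t⟩
    · exact List.isChain_singleton _
    · rw [h] at ih
      by_cases hxy : x.1 = y.1 ∧ x.2 = !y.2
      · simp only [hxy, and_self, if_true]
        exact ih.tail
      · simp only [hxy, if_false]
        exact List.isChain_cons_cons.mpr ⟨hxy, ih⟩

lemma reduce_eq_self_of_chain' {L : List (Bool × Bool)} (h : List.Chain' NoCancel L) :
    FreeGroup.reduce L = L := by
  induction L with
  | nil => rfl
  | cons x L ih =>
    rw [FreeGroup.reduce.cons, ih h.tail]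
    rcases L with _ | ⟨y, t⟩
    · rfl
    · have hxy : NoCancel x y := (List.isChain_cons_cons.mp h).1
      simp only [hxy, if_false]
      exact if_neg hxy

lemma chain'_toWord (w : FreeGroup Bool) : List.Chain' NoCancel w.toWord := by
  have := FreeGroup.reduce_toWord w
  rw [← this]
  exact chain'_noCancel_reduce _

-- ## more
section MORE

noncomputable def fgen : Bool → SO 3 := fun b => bif b then soA else soB

noncomputable def ltr (p : Bool × Bool) : SO 3 := cond p.2 (fgen p.1) (fgen p.1)⁻¹

noncomputable def wordProd (L : List (Bool × Bool)) : SO 3 := (L.map ltr).prod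

lemma toM_mul (g h : SO 3) :
    ((g * h : SO 3) : Matrix (Fin 3) (Fin 3) ℝ) =
      (g : Matrix (Fin 3) (Fin 3) ℝ) * (h : Matrix (Fin 3) (Fin 3) ℝ) := rfl

lemma toM_one : ((1 : SO 3) : Matrix (Fin 3) (Fin 3) ℝ) = 1 := rfl

lemma smul_eq_mulVec (g : SO 3) (x : Fin 3 → ℝ) :
    g • x = ((g : Matrix (Fin 3) (Fin 3) ℝ)).mulVec x := rfl

lemma toM_soA_inv : ((soA⁻¹ : SO 3) : Matrix (Fin 3) (Fin 3) ℝ) = matAᵀ := rfl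

lemma toM_soB_inv : ((soB⁻¹ : SO 3) : Matrix (Fin 3) (Fin 3) ℝ) = matBᵀ := rfl

lemma ltr_mat : ∀ p : Bool × Bool, ((ltr p : SO 3) : Matrix (Fin 3) (Fin 3) ℝ) =
    cond p.1 (cond p.2 matA matAᵀ) (cond p.2 matB matBᵀ)
  | (true, true) => rfl
  | (true, false) => rfl
  | (false, true) => rfl
  | (false, false) => rfl

lemma wordProd_mulVec (L : List (Bool × Bool)) :
    ((wordProd L : SO 3) : Matrix (Fin 3) (Fin 3) ℝ).mulVec ![1, 0, 0] =
      ![((btVec L).1 : ℝ) / 3 ^ L.length,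
        ((btVec L).2.1 : ℝ) * Real.sqrt 2 / 3 ^ L.length,
        ((btVec L).2.2 : ℝ) / 3 ^ L.length] := by
  induction L with
  | nil =>
    show ((1 : SO 3) : Matrix (Fin 3) (Fin 3) ℝ).mulVec ![1,0,0] = _
    rw [toM_one, Matrix.one_mulVec]
    funext i; fin_cases i <;> norm_num [btVec]
  | cons x L ih =>
    have h1 : wordProd (x :: L) = ltr x * wordProd L := by
      simp [wordProd]
    rw [h1, toM_mul, ← Matrix.mulVec_mulVec, ih]
    obtain ⟨⟨a, b, c⟩, hv⟩ : ∃ v, btVec L = v := ⟨_, rfl⟩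
    rw [hv]
    have hbv : btVec (x :: L) = btStep x (a, b, c) := by
      show btStep x (btVec L) = _; rw [hv]
    rw [hbv, ltr_mat]
    have h2 : Real.sqrt 2 * Real.sqrt 2 = 2 := sqrt_two_mul_self
    have h3 : (3:ℝ) ^ (x :: L).length = 3 * 3 ^ L.length := by
      rw [List.length_cons]; ring
    rcases x with ⟨_ | _, _ | _⟩ <;>
      · simp only [btStep, cond_true, cond_false]
        funext i
        fin_cases i <;>
          · simp [matA, matB, Matrix.mulVec, dotProduct, Fin.sum_univ_three,
              Matrix.transpose_apply, h3, Matrix.vecHead, Matrix.vecTail]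
            push_cast
            field_simp
            try ring_nf
            try simp only [Real.sq_sqrt (show (0:ℝ) ≤ 2 by norm_num)]
            try ring_nf
            try simp only [Real.sq_sqrt (show (0:ℝ) ≤ 2 by norm_num)]
            try ring

lemma wordProd_ne_one_aux (L : List (Bool × Bool)) (hch : List.Chain' NoCancel L)
    (hs : ∃ s, L.getLast? = some (true, s)) : wordProd L ≠ 1 := by
  intro h
  have hmv := wordProd_mulVec L
  rw [h, toM_one, Matrix.one_mulVec] at hmv
  have h1 := congrFun hmv 1
  simp only [Matrix.cons_val_one, Matrix.head_cons, Matrix.cons_val_zero] at h1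
  have hb : ((btVec L).2.1 : ℝ) = 0 := by
    have hs2 : Real.sqrt 2 ≠ 0 := by
      intro h'; have := sqrt_two_mul_self; rw [h'] at this; norm_num at this
    have h3 : ((3:ℝ) ^ L.length) ≠ 0 := by positivity
    field_simp at h1
    have h1' : ((btVec L).2.1 : ℝ) * Real.sqrt 2 = 0 := by rw [← h1]; simp
    exact_mod_cast (mul_eq_zero.mp h1').resolve_right hs2
  have hbz : ((btVec L).2.1 : ZMod 3) = 0 := by
    have : (btVec L).2.1 = 0 := by exact_mod_cast hb
    rw [this]; simp
  exact btVec_b_ne_zero L hch hs hbz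

lemma ltr_mul_ltr_neg (d : Bool) : ltr (true, d) * ltr (true, !d) = 1 := by
  cases d <;> simp [ltr, fgen]

lemma wordProd_ne_one (L : List (Bool × Bool)) (hL : L ≠ [])
    (hch : List.Chain' NoCancel L) : wordProd L ≠ 1 := by
  obtain ⟨⟨zi, zs⟩, L₀, rfl⟩ : ∃ z L₀, L = z :: L₀ := by
    rcases L with _ | ⟨z, L₀⟩; · exact absurd rfl hL
    · exact ⟨z, L₀, rfl⟩
  obtain ⟨⟨li, ls⟩, hlast⟩ : ∃ p, ((zi, zs) :: L₀).getLast? = some p :=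
    ⟨_, List.getLast?_eq_getLast (by simp)⟩
  cases li with
  | true => exact wordProd_ne_one_aux _ hch ⟨ls, hlast⟩
  | false =>
    intro hone
    -- conjugate to make the word end with an `a`-type letter
    set d : Bool := if zi then zs else true with hd
    set e : Bool × Bool := (true, !d) with he
    set L' : List (Bool × Bool) := (true, d) :: (((zi, zs) :: L₀) ++ [e]) with hL'
    have hch' : List.Chain' NoCancel L' := by
      rw [hL']
      refine List.isChain_cons.mpr ?_
      constructor
      · intro y hy
        simp only [List.head?_cons, List.cons_append, Option.mem_def, Option.some_inj] at hy
        subst hy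
        cases zi <;> simp [NoCancel, hd]
      · rw [List.isChain_append]
        refine ⟨hch, List.isChain_singleton _, ?_⟩
        intro x hx y hy
        rw [hlast] at hx
        simp only [List.head?_cons, Option.mem_def, Option.some_inj] at hx hy
        subst hx; subst hy
        simp [NoCancel, he]
    have hlast' : ∃ s, L'.getLast? = some (true, s) := by
      refine ⟨!d, ?_⟩
      have hrw : L' = ((true, d) :: ((zi, zs) :: L₀)) ++ [e] := by simp [hL']
      rw [hrw, List.getLast?_concat]
    have hprod : wordProd L' = ltr (true, d) * wordProd ((zi, zs) :: L₀) * ltr e := by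
      simp [wordProd, hL', List.map_append, mul_assoc]
    have : wordProd L' = 1 := by
      rw [hprod, hone, mul_one, he, ltr_mul_ltr_neg]
    exact wordProd_ne_one_aux L' hch' hlast' this
lemma sphere_smul (g : SO 3) (x : Fin 3 → ℝ) (hx : x ∈ SphereSet 2) :
    g • x ∈ SphereSet 2 := by
  set M : Matrix (Fin 3) (Fin 3) ℝ := (g : Matrix (Fin 3) (Fin 3) ℝ) with hM
  have hg : star M * M = 1 := by
    have := g.1.2
    rw [Matrix.mem_orthogonalGroup_iff'] at this
    exact this
  have hMt : star M = Mᵀ := by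
    rw [Matrix.star_eq_conjTranspose]
    ext i j
    simp [Matrix.conjTranspose_apply]
  have key : ∀ v : Fin 3 → ℝ, ∑ i, v i ^ 2 = dotProduct v v := by
    intro v; simp [dotProduct, sq]
  show ∑ i, (g • x) i ^ 2 = 1
  rw [_root_.smul_eq_mulVec, ← hM]
  calc ∑ i, (M.mulVec x) i ^ 2 = dotProduct (M.mulVec x) (M.mulVec x) := key _
    _ = dotProduct (Matrix.vecMul x Mᵀ) (M.mulVec x) := by
        rw [Matrix.vecMul_transpose]
    _ = dotProduct x ((Mᵀ * M).mulVec x) := by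
        simp [dotProduct_mulVec, ← Matrix.vecMul_vecMul]
    _ = dotProduct x x := by rw [← hMt, hg, Matrix.one_mulVec]
    _ = 1 := by rw [← key]; exact hx

/-- The sphere minus the fixed points. -/
def Eset : Set (Fin 3 → ℝ) := SphereSet 2 \ fixedPointSet

lemma smul_mem_Eset {g : SO 3} (hg : g ∈ Hsub) {x : Fin 3 → ℝ} (hx : x ∈ Eset) :
    g • x ∈ Eset := by
  obtain ⟨hxs, hxd⟩ := hx
  refine ⟨sphere_smul g x hxs, ?_⟩
  rintro ⟨-, h, hmem, hne, hfix⟩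
  refine hxd ⟨hxs, g⁻¹ * h * g, ?_, ?_, ?_⟩
  · exact Hsub.mul_mem (Hsub.mul_mem (Hsub.inv_mem hg) hmem) hg
  · intro hcon
    apply hne
    have := congrArg (fun z => g * z * g⁻¹) hcon
    simpa [mul_assoc] using this
  · show (g⁻¹ * h * g) • x = x
    rw [mul_assoc, mul_smul, mul_smul, hfix, inv_smul_smul]

noncomputable def orbRep (x : Fin 3 → ℝ) : Fin 3 → ℝ :=
  (Quotient.mk (MulAction.orbitRel Hsub (Fin 3 → ℝ)) x).out

lemma orbRep_spec (x : Fin 3 → ℝ) : ∃ h : Hsub, (h : SO 3) • orbRep x = x := by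
  have h : orbRep x ∈ MulAction.orbit Hsub x :=
    Quotient.mk_out (s := MulAction.orbitRel Hsub (Fin 3 → ℝ)) x
  obtain ⟨u, hu⟩ := h
  refine ⟨u⁻¹, ?_⟩
  have hu' : (u : SO 3) • x = orbRep x := hu
  rw [← hu', ← mul_smul]
  simp

lemma orbRep_smul {g : SO 3} (hg : g ∈ Hsub) (x : Fin 3 → ℝ) :
    orbRep (g • x) = orbRep x := by
  unfold orbRep
  congr 1
  apply Quotient.sound
  show g • x ∈ MulAction.orbit Hsub x
  exact ⟨⟨g, hg⟩, rfl⟩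

lemma orbRep_expr (x : Fin 3 → ℝ) : ∃ h : Hsub, orbRep x = (h : SO 3) • x := by
  obtain ⟨h, hh⟩ := orbRep_spec x
  refine ⟨h⁻¹, ?_⟩
  conv_rhs => rw [← hh]
  rw [← mul_smul]
  simp

lemma orbRep_idem (x : Fin 3 → ℝ) : orbRep (orbRep x) = orbRep x := by
  obtain ⟨h, hh⟩ := orbRep_expr x
  conv_lhs => rw [hh]
  rw [orbRep_smul h.2]

lemma orbRep_mem_Eset {x : Fin 3 → ℝ} (hx : x ∈ Eset) : orbRep x ∈ Eset := by
  obtain ⟨h, hh⟩ := orbRep_expr x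
  rw [hh]
  exact smul_mem_Eset h.2 hx

/-- The transversal: one point in each `H`-orbit of `Eset`. -/
noncomputable def transv : Set (Fin 3 → ℝ) := orbRep '' Eset

open Pointwise

/-- The union of the `g`-translates of the transversal, `g` ranging over `S`. -/
noncomputable def piece (S : Set (SO 3)) : Set (Fin 3 → ℝ) := ⋃ g ∈ S, g • transv

lemma piece_union (S T : Set (SO 3)) : piece (S ∪ T) = piece S ∪ piece T := by
  unfold piece
  rw [Set.biUnion_union]

lemma piece_smul (σ : SO 3) (S : Set (SO 3)) : piece (σ • S) = σ • piece S := by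
  unfold piece
  ext x
  simp only [Set.mem_iUnion, exists_prop, Set.mem_smul_set]
  constructor
  · rintro ⟨g, ⟨h, hh, rfl⟩, m, hm, rfl⟩
    refine ⟨h • m, ⟨h, hh, m, hm, rfl⟩, ?_⟩
    rw [smul_eq_mul, mul_smul]
  · rintro ⟨y, ⟨h, hh, m, hm, rfl⟩, rfl⟩
    refine ⟨σ * h, ⟨h, hh, rfl⟩, m, hm, (mul_smul σ h m)⟩

lemma piece_subset_Eset {S : Set (SO 3)} (hS : S ⊆ (Hsub : Set (SO 3))) :
    piece S ⊆ Eset := by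
  rintro x hx
  rw [piece, Set.mem_iUnion] at hx
  obtain ⟨g, hx⟩ := hx
  rw [Set.mem_iUnion] at hx
  obtain ⟨hg, hx⟩ := hx
  rw [Set.mem_smul_set] at hx
  obtain ⟨m, ⟨y, hy, rfl⟩, rfl⟩ := hx
  exact smul_mem_Eset (hS hg) (orbRep_mem_Eset hy)

lemma Eset_eq_piece : Eset = piece (Hsub : Set (SO 3)) := by
  apply Set.Subset.antisymm
  · intro x hx
    obtain ⟨h, hh⟩ := orbRep_spec x
    rw [piece, Set.mem_iUnion]
    refine ⟨(h : SO 3), Set.mem_iUnion.mpr ⟨h.2, ?_⟩⟩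
    exact Set.mem_smul_set.mpr ⟨orbRep x, ⟨x, hx, rfl⟩, hh⟩
  · exact piece_subset_Eset le_rfl

lemma piece_disjoint {S T : Set (SO 3)} (hS : S ⊆ (Hsub : Set (SO 3)))
    (hT : T ⊆ (Hsub : Set (SO 3))) (hST : Disjoint S T) :
    Disjoint (piece S) (piece T) := by
  rw [Set.disjoint_left]
  rintro x hxS hxT
  rw [piece, Set.mem_iUnion] at hxS hxT
  obtain ⟨g, hg⟩ := hxS
  obtain ⟨g', hg'⟩ := hxT
  rw [Set.mem_iUnion] at hg hg'
  obtain ⟨hgS, hg⟩ := hg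
  obtain ⟨hg'T, hg'⟩ := hg'
  rw [Set.mem_smul_set] at hg hg'
  obtain ⟨m, ⟨y, hy, rfl⟩, hgm⟩ := hg
  obtain ⟨m', ⟨y', hy', rfl⟩, hg'm⟩ := hg'
  -- same orbit, hence same representative
  have hrep : orbRep y = orbRep y' := by
    have h1 : orbRep (g • orbRep y) = orbRep y :=
      (orbRep_smul (hS hgS) _).trans (orbRep_idem y)
    have h2 : orbRep (g' • orbRep y') = orbRep y' :=
      (orbRep_smul (hT hg'T) _).trans (orbRep_idem y')
    rw [← h1, hgm, ← hg'm, h2]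
  rw [hrep] at hgm
  have heq : g • orbRep y' = g' • orbRep y' := by rw [hgm, hg'm]
  have hfix : (g'⁻¹ * g) • orbRep y' = orbRep y' := by
    rw [mul_smul, heq, ← mul_smul]
    simp
  have hmem : orbRep y' ∈ Eset := orbRep_mem_Eset hy'
  have hgg' : g = g' := by
    by_contra hne
    refine hmem.2 ⟨hmem.1, g'⁻¹ * g, Hsub.mul_mem (Hsub.inv_mem (hT hg'T)) (hS hgS), ?_, hfix⟩
    intro hcon
    apply hne
    have := congrArg (fun z => g' * z) hcon
    simpa [mul_assoc] using this
  subst hgg'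
  exact Set.disjoint_left.mp hST hgS hg'T

noncomputable def phi : FreeGroup Bool →* SO 3 := FreeGroup.lift fgen

lemma phi_mk (L : List (Bool × Bool)) : phi (FreeGroup.mk L) = wordProd L := by
  rw [phi, FreeGroup.lift_mk]
  rfl

lemma phi_eval (w : FreeGroup Bool) : phi w = wordProd w.toWord := by
  conv_lhs => rw [← FreeGroup.mk_toWord (x := w)]
  exact phi_mk _

lemma phi_injective : Function.Injective phi := by
  rw [injective_iff_map_eq_one]
  intro a ha
  by_contra hne
  have hL : a.toWord ≠ [] := fun h => hne (FreeGroup.toWord_eq_nil_iff.mp h)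
  exact wordProd_ne_one _ hL (chain'_toWord a) (by rw [← phi_eval]; exact ha)

lemma phi_range : phi.range = Hsub := by
  rw [phi, FreeGroup.range_lift_eq_closure]
  have h : Set.range fgen = {soA, soB} := by
    ext g
    simp only [Set.mem_range, Set.mem_insert_iff, Set.mem_singleton_iff]
    constructor
    · rintro ⟨b, rfl⟩
      cases b
      · right; rfl
      · left; rfl
    · rintro (rfl | rfl)
      · exact ⟨true, rfl⟩
      · exact ⟨false, rfl⟩
  rw [h, Hsub]

noncomputable def Wset (l : Bool × Bool) : Set (SO 3) :=
  phi '' {w : FreeGroup Bool | w.toWord.head? = some l}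

lemma Wset_subset (l : Bool × Bool) : Wset l ⊆ (Hsub : Set (SO 3)) := by
  rintro g ⟨w, -, rfl⟩
  rw [← phi_range]
  exact ⟨w, rfl⟩

lemma Wset_disjoint {l l' : Bool × Bool} (h : l ≠ l') : Disjoint (Wset l) (Wset l') := by
  rw [Wset, Wset, Set.disjoint_image_iff phi_injective]
  rw [Set.disjoint_left]
  intro w hw hw'
  simp only [Set.mem_setOf_eq] at hw hw'
  rw [hw] at hw'
  exact h (Option.some_inj.mp hw')

lemma toWord_mk_cons (l : Bool × Bool) (w : FreeGroup Bool)
    (h : w.toWord.head? ≠ some (l.1, !l.2)) :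
    (FreeGroup.mk [l] * w).toWord = l :: w.toWord := by
  have h1 : FreeGroup.mk [l] * w = FreeGroup.mk ([l] ++ w.toWord) := by
    conv_lhs => rw [← FreeGroup.mk_toWord (x := w)]
    rw [FreeGroup.mul_mk]
  rw [h1, FreeGroup.toWord_mk, List.singleton_append]
  apply reduce_eq_self_of_chain'
  refine List.isChain_cons.mpr ?_
  refine ⟨?_, chain'_toWord w⟩
  intro y hy hc
  apply h
  rw [Option.mem_def] at hy
  rw [hy]
  obtain ⟨e1, e2⟩ := hc
  obtain ⟨y1, y2⟩ := y
  simp only [e1, e2, Bool.not_not]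

lemma of_inv_eq_mk (i : Bool) : (FreeGroup.of i)⁻¹ = FreeGroup.mk [(i, false)] := by
  show (FreeGroup.mk [(i, true)])⁻¹ = _
  rw [FreeGroup.inv_mk]
  rfl

lemma head_inv_mul (i : Bool) (u : FreeGroup Bool) :
    ((FreeGroup.of i)⁻¹ * u).toWord.head? = some (i, false) ↔
      u.toWord.head? ≠ some (i, true) := by
  constructor
  · intro h hcon
    -- then the first letter cancels
    obtain ⟨t, ht⟩ : ∃ t, u.toWord = (i, true) :: t := by
      rcases he : u.toWord with _ | ⟨z, t⟩
      · rw [he] at hcon; simp at hcon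
      · rw [he] at hcon
        simp only [List.head?_cons, Option.some_inj] at hcon
        exact ⟨t, by rw [hcon]⟩
    have hch := chain'_toWord u
    rw [ht] at hch
    have hred : ((FreeGroup.of i)⁻¹ * u).toWord = t := by
      rw [of_inv_eq_mk]
      conv_lhs => rw [← FreeGroup.mk_toWord (x := u)]
      rw [FreeGroup.mul_mk, FreeGroup.toWord_mk, ht]
      have htred : FreeGroup.reduce t = t := by
        apply reduce_eq_self_of_chain'
        exact hch.tail
      show FreeGroup.reduce ((i, false) :: (i, true) :: t) = t
      rw [FreeGroup.reduce.cons,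
        show FreeGroup.reduce ((i, true) :: t) = (i, true) :: t from
          reduce_eq_self_of_chain' hch]
      simp
    rw [hred] at h
    -- but t cannot start with (i, false) since u.toWord is reduced
    rcases he : t with _ | ⟨z, t'⟩
    · rw [he] at h; simp at h
    · rw [he] at h hch
      simp only [List.head?_cons, Option.some_inj] at h
      have := (List.isChain_cons_cons.mp hch).1
      rw [h] at this
      exact this ⟨rfl, rfl⟩
  · intro h
    rw [of_inv_eq_mk, toWord_mk_cons (i, false) u (by simpa using h)]
    rfl

lemma shift_set (i : Bool) :
    (phi (FreeGroup.of i)) • Wset (i, false) =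
      phi '' {u : FreeGroup Bool | u.toWord.head? ≠ some (i, true)} := by
  ext g
  rw [Set.mem_smul_set]
  constructor
  · rintro ⟨-, ⟨v, hv, rfl⟩, rfl⟩
    refine ⟨FreeGroup.of i * v, ?_, by rw [smul_eq_mul, ← _root_.map_mul]⟩
    show (FreeGroup.of i * v).toWord.head? ≠ some (i, true)
    have hv' : ((FreeGroup.of i)⁻¹ * (FreeGroup.of i * v)).toWord.head? = some (i, false) := by
      rw [← mul_assoc, inv_mul_cancel, one_mul]
      exact hv
    exact (head_inv_mul i _).mp hv'
  · rintro ⟨u, hu, rfl⟩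
    refine ⟨phi ((FreeGroup.of i)⁻¹ * u), ⟨(FreeGroup.of i)⁻¹ * u, ?_, rfl⟩, ?_⟩
    · exact (head_inv_mul i u).mpr hu
    · rw [smul_eq_mul, ← _root_.map_mul, ← mul_assoc, mul_inv_cancel, one_mul]

lemma union_Wset (i : Bool) :
    Wset (i, true) ∪ (phi (FreeGroup.of i)) • Wset (i, false) = (Hsub : Set (SO 3)) := by
  rw [shift_set, Wset, ← Set.image_union]
  have h : {w : FreeGroup Bool | w.toWord.head? = some (i, true)} ∪
      {u : FreeGroup Bool | u.toWord.head? ≠ some (i, true)} = Set.univ := by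
    ext w
    simp only [Set.mem_union, Set.mem_setOf_eq, Set.mem_univ, iff_true]
    tauto
  rw [h, Set.image_univ, ← phi_range]
  rfl

lemma disjoint_Wset_shift (i : Bool) :
    Disjoint (Wset (i, true)) ((phi (FreeGroup.of i)) • Wset (i, false)) := by
  rw [shift_set, Wset, Set.disjoint_image_iff phi_injective, Set.disjoint_left]
  intro w hw hw'
  exact hw' hw

lemma shift_subset (i : Bool) :
    (phi (FreeGroup.of i)) • Wset (i, false) ⊆ (Hsub : Set (SO 3)) := by
  rw [shift_set]
  rintro g ⟨w, -, rfl⟩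
  rw [← phi_range]
  exact ⟨w, rfl⟩

lemma iUnion_fin_two {α : Type*} (S T : Set α) : (⋃ j : Fin 2, ![S, T] j) = S ∪ T := by
  ext x
  simp [Fin.exists_fin_two]

lemma equi_part (i : Bool) :
    Equidecomposable (SO 3) (piece (Wset (i, true)) ∪ piece (Wset (i, false))) Eset := by
  refine ⟨2, ![1, (phi (FreeGroup.of i))⁻¹],
    ![piece (Wset (i, true)), piece (Wset (i, false))],
    ![piece (Wset (i, true)), piece ((phi (FreeGroup.of i)) • Wset (i, false))],
    ?_, ?_, ?_, ?_, ?_⟩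
  · rw [iUnion_fin_two]
  · rw [iUnion_fin_two, ← piece_union, union_Wset, Eset_eq_piece]
  · intro j k hjk
    fin_cases j <;> fin_cases k <;>
      first
        | exact absurd rfl hjk
        | (simp only [Fin.mk_zero, Fin.mk_one, Fin.isValue, Matrix.cons_val_zero, Matrix.cons_val_one,
             Matrix.head_cons]
           first
             | exact piece_disjoint (Wset_subset _) (Wset_subset _) (Wset_disjoint (by simp))
             | exact (piece_disjoint (Wset_subset _) (Wset_subset _)
                 (Wset_disjoint (by simp))).symm)
  · intro j k hjk
    fin_cases j <;> fin_cases k <;>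
      first
        | exact absurd rfl hjk
        | (simp only [Fin.mk_zero, Fin.mk_one, Fin.isValue, Matrix.cons_val_zero, Matrix.cons_val_one,
             Matrix.head_cons]
           first
             | exact piece_disjoint (Wset_subset _) (shift_subset i) (disjoint_Wset_shift i)
             | exact (piece_disjoint (Wset_subset _) (shift_subset i)
                 (disjoint_Wset_shift i)).symm)
  · intro j
    fin_cases j
    · simp only [Fin.mk_zero, Fin.isValue, Matrix.cons_val_zero]
      rw [one_smul]
    · simp only [Fin.mk_one, Fin.isValue, Matrix.cons_val_one, Matrix.head_cons, Matrix.cons_val_zero]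
      rw [piece_smul, inv_smul_smul]

end MORE

/-- `S² \ D` is `SO(3)`-paradoxical, where `D` is the set of points of `S²` fixed by a
non-identity element of the free subgroup `H = ⟨A, B⟩`. -/
theorem sphere_minus_fixed_points_paradoxical :
    Paradoxical (SO 3) (SphereSet 2 \ fixedPointSet) := by
  show Paradoxical (SO 3) Eset
  refine ⟨piece (Wset (true, true)) ∪ piece (Wset (true, false)),
          piece (Wset (false, true)) ∪ piece (Wset (false, false)),
          ?_, ?_, ?_, equi_part true, equi_part false⟩
  · exact Set.union_subset (piece_subset_Eset (Wset_subset _))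
      (piece_subset_Eset (Wset_subset _))
  · exact Set.union_subset (piece_subset_Eset (Wset_subset _))
      (piece_subset_Eset (Wset_subset _))
  · have h : ∀ l l' : Bool × Bool, l ≠ l' →
        Disjoint (piece (Wset l)) (piece (Wset l')) :=
      fun l l' h => piece_disjoint (Wset_subset _) (Wset_subset _) (Wset_disjoint h)
    refine Set.disjoint_union_left.mpr ⟨Set.disjoint_union_right.mpr ⟨?_, ?_⟩,
      Set.disjoint_union_right.mpr ⟨?_, ?_⟩⟩ <;> exact h _ _ (by simp)
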